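/- The linear involution I_ψ : ℝ⁶ → ℝ⁶ induced by the coordinate permutation ψ = (x₁₂ x₁₃)(x₃₁ x₂₁)(x₃₂ x₂₃) (which swaps the coordinates x₁₂ ↔ x₁₃, x₃₁ ↔ x₂₁, and x₃₂ ↔ x₂₃) is an orthogonal transformation that maps the polytope P onto itself and maps P₁ = conv({O} ∪ (P ∩ α₁)) onto itself. -/

import Mathlib

open MeasureTheory

/-- The polytope `P ⊂ ℝ⁶` in coordinates `(x₁₂, x₂₃, x₃₁, x₁₃, x₃₂, x₂₁)`,
indexed as `(x 0, x 1, x 2, x 3, x 4, x 5)`. -/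
def polyP : Set (EuclideanSpace ℝ (Fin 6)) :=
  {x | x 0 + x 3 + 2 * (x 5 + x 2) ≤ 1 ∧
       x 5 + x 1 + 2 * (x 0 + x 4) ≤ 1 ∧
       x 2 + x 4 + 2 * (x 3 + x 1) ≤ 1 ∧
       ∀ i, 0 ≤ x i}

/-- The hyperplane `α₁ : x₁₂+x₁₃+2(x₂₁+x₃₁) = 1`. -/
def alpha1 : Set (EuclideanSpace ℝ (Fin 6)) :=
  {x | x 0 + x 3 + 2 * (x 5 + x 2) = 1}

/-- `P₁ = conv({O} ∪ (P ∩ α₁))`. -/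
noncomputable def P1 : Set (EuclideanSpace ℝ (Fin 6)) :=
  convexHull ℝ ({0} ∪ (polyP ∩ alpha1))

/-- The map `I_ψ` induced by the coordinate permutation
`ψ = (x₁₂ x₁₃)(x₃₁ x₂₁)(x₃₂ x₂₃)`, swapping `x₁₂ ↔ x₁₃`, `x₃₁ ↔ x₂₁`,
`x₃₂ ↔ x₂₃`. -/
def Ipsi (x : EuclideanSpace ℝ (Fin 6)) : EuclideanSpace ℝ (Fin 6) :=
  WithLp.toLp 2 ![x 3, x 4, x 5, x 0, x 1, x 2]

lemma ipsi_invol (x : EuclideanSpace ℝ (Fin 6)) : Ipsi (Ipsi x) = x := by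
  ext i
  fin_cases i <;> rfl

lemma ipsi_mem {x : EuclideanSpace ℝ (Fin 6)} (h : x ∈ polyP) : Ipsi x ∈ polyP := by
  obtain ⟨h1, h2, h3, h4⟩ := h
  refine ⟨?_, ?_, ?_, ?_⟩
  · show x 3 + x 0 + 2 * (x 2 + x 5) ≤ 1; linarith
  · show x 2 + x 4 + 2 * (x 3 + x 1) ≤ 1; linarith
  · show x 5 + x 1 + 2 * (x 0 + x 4) ≤ 1; linarith
  · intro i; fin_cases i <;> simpa [Ipsi] using h4 _

lemma ipsi_mem_alpha {x : EuclideanSpace ℝ (Fin 6)} (h : x ∈ alpha1) : Ipsi x ∈ alpha1 := by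
  show x 3 + x 0 + 2 * (x 2 + x 5) = 1
  have : x 0 + x 3 + 2 * (x 5 + x 2) = 1 := h
  linarith

lemma ipsi_image_of_pres {S : Set (EuclideanSpace ℝ (Fin 6))}
    (h : ∀ x ∈ S, Ipsi x ∈ S) : Ipsi '' S = S := by
  apply Set.Subset.antisymm
  · rintro _ ⟨x, hx, rfl⟩; exact h x hx
  · intro x hx; exact ⟨Ipsi x, h x hx, ipsi_invol x⟩

lemma ipsi_linear : IsLinearMap ℝ Ipsi := by
  constructor
  · intro x y; ext i; fin_cases i <;> simp [Ipsi] <;> rfl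
  · intro c x; ext i; fin_cases i <;> simp [Ipsi] <;> rfl

/-- `I_ψ` is an orthogonal (linear, norm-preserving) involution mapping `P`
onto itself and `P₁` onto itself. -/
theorem Ipsi_orthogonal_involution_preserves :
    IsLinearMap ℝ Ipsi ∧
    (∀ x, ‖Ipsi x‖ = ‖x‖) ∧
    Ipsi ∘ Ipsi = id ∧
    Ipsi '' polyP = polyP ∧
    Ipsi '' P1 = P1 := by
  refine ⟨ipsi_linear, ?_, ?_, ipsi_image_of_pres fun x hx => ipsi_mem hx, ?_⟩
  · intro x
    rw [EuclideanSpace.norm_eq, EuclideanSpace.norm_eq]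
    congr 1
    rw [Fin.sum_univ_six, Fin.sum_univ_six]
    show ‖x 3‖^2 + ‖x 4‖^2 + ‖x 5‖^2 + ‖x 0‖^2 + ‖x 1‖^2 + ‖x 2‖^2 = _
    ring
  · funext x; exact ipsi_invol x
  · rw [P1, show Ipsi = ⇑(ipsi_linear.mk' Ipsi) from rfl,
      (ipsi_linear.mk' Ipsi).image_convexHull]
    congr 1
    rw [Set.image_union]
    congr 1
    · simp [Set.image_singleton]
      show Ipsi 0 = 0
      ext i; fin_cases i <;> simp [Ipsi] <;> rfl
    · exact ipsi_image_of_pres fun x hx => ⟨ipsi_mem hx.1, ipsi_mem_alpha hx.2⟩
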